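/- Let an election with voters v_1, …, v_z (z odd) be single-crossing with respect to the order v_1 < v_2 < ⋯ < v_z, and let m be the median voter v_{(z+1)/2}. Then for every pair of distinct alternatives x, y, a strict majority of voters prefers x to y if and only if the median voter prefers x to y. Consequently, the top-ranked alternative of the median voter is a Condorcet winner. -/

import Mathlib

/-- Median voter theorem for single-crossing elections with an odd number of
voters: a strict majority prefers x to y iff the median voter does, and hence
any alternative topping the median voter's order is a Condorcet winner. -/
theorem stmt2 {C : Type*} [Fintype C] {z : ℕ} (hz : Odd z)
    (pref : Fin z → C → C → Prop) [∀ v, DecidableRel (pref v)]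
    (hlin : ∀ v, IsStrictTotalOrder C (pref v))
    (hsc : ∀ x y : C, x ≠ y → ∀ i j k : Fin z, i < j → j < k →
      pref i x y → pref k x y → pref j x y) :
    ∀ m : Fin z, (m : ℕ) = z / 2 →
      ((∀ x y : C, x ≠ y →
        (2 * (Finset.univ.filter fun v => pref v x y).card > z ↔ pref m x y)) ∧
       (∀ c : C, (∀ a, a ≠ c → pref m c a) →
         ∀ a, a ≠ c →
           (Finset.univ.filter fun v => pref v c a).card >
           (Finset.univ.filter fun v => pref v a c).card)) := by
  intro m hm
  obtain ⟨t, ht⟩ := hz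
  have hasymm : ∀ v (x y : C), pref v x y → ¬ pref v y x := fun v x y h h' =>
    (hlin v).irrefl x ((hlin v).trans _ _ _ h h')
  have htri : ∀ v (x y : C), x ≠ y → ¬ pref v y x → pref v x y := by
    intro v x y hxy h
    by_contra h1
    exact hxy ((hlin v).trichotomous x y h1 h)
  have hcards : ∀ x y : C, x ≠ y →
      (Finset.univ.filter fun v => pref v x y).card
        + (Finset.univ.filter fun v => pref v y x).card = z := by
    intro x y hxy
    have heq : (Finset.univ.filter fun v => pref v y x)
        = Finset.univ.filter fun v => ¬ pref v x y := by
      apply Finset.filter_congr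
      intro v _
      constructor
      · exact hasymm v y x
      · exact htri v y x hxy.symm
    rw [heq, Finset.card_filter_add_card_filter_not]
    simp
  have key : ∀ x y : C, x ≠ y → pref m x y →
      2 * (Finset.univ.filter fun v => pref v x y).card > z := by
    intro x y hxy hmxy
    have hTcard : (Finset.univ.filter fun v => pref v y x).card ≤ t := by
      have hside : (∀ v ∈ Finset.univ.filter fun v => pref v y x, v < m) ∨
          (∀ v ∈ Finset.univ.filter fun v => pref v y x, m < v) := by
        by_contra hcon
        push_neg at hcon
        obtain ⟨⟨k, hk, hk2⟩, ⟨i, hi, hi2⟩⟩ := hcon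
        simp only [Finset.mem_filter, Finset.mem_univ, true_and] at hi hk
        have hkm : m < k := lt_of_le_of_ne hk2
          (fun h => hasymm m x y hmxy (h ▸ hk))
        have him : i < m := lt_of_le_of_ne hi2
          (fun h => hasymm m x y hmxy (h ▸ hi))
        exact hasymm m x y hmxy (hsc y x hxy.symm i m k him hkm hi hk)
      have hmt : (m : ℕ) = t := by omega
      rcases hside with h | h
      · have hsub : (Finset.univ.filter fun v => pref v y x) ⊆ Finset.Iio m := by
          intro v hv
          simpa using h v hv
        calc (Finset.univ.filter fun v => pref v y x).card
            ≤ (Finset.Iio m).card := Finset.card_le_card hsub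
          _ = (m : ℕ) := by simp
          _ = t := hmt
      · have hsub : (Finset.univ.filter fun v => pref v y x) ⊆ Finset.Ioi m := by
          intro v hv
          simpa using h v hv
        calc (Finset.univ.filter fun v => pref v y x).card
            ≤ (Finset.Ioi m).card := Finset.card_le_card hsub
          _ = z - 1 - (m : ℕ) := by simp [Fin.card_Ioi]
          _ = t := by omega
    have := hcards x y hxy
    omega
  have main : ∀ x y : C, x ≠ y →
      (2 * (Finset.univ.filter fun v => pref v x y).card > z ↔ pref m x y) := by
    intro x y hxy
    constructor
    · intro h
      by_contra hn
      have hmyx : pref m y x := htri m y x hxy.symm hn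
      have := key y x hxy.symm hmyx
      have := hcards x y hxy
      omega
    · exact key x y hxy
  refine ⟨main, ?_⟩
  intro c htop a hac
  have h1 := key c a hac.symm (htop a hac)
  have h2 := hcards c a hac.symm
  omega
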